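/- The two-qubit state η = (1/4)(I₄ + σ_y ⊗ σ_y), where σ_y is the Pauli-y matrix, is a separable density matrix (a convex combination of tensor product states) and satisfies ‖η − η^{T_B}‖₁ > 0, i.e. η is not invariant under partial transpose. -/

import Mathlib

open Matrix
open scoped ComplexOrder

/-- Singular values of a complex square matrix: square roots of eigenvalues of `Aᴴ * A`. -/
noncomputable def singularValues {n : Type*} [Fintype n] [DecidableEq n]
    (A : Matrix n n ℂ) : n → ℝ :=
  fun i => Real.sqrt ((Matrix.isHermitian_conjTranspose_mul_self A).eigenvalues i)

/-- Trace norm: sum of singular values. -/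
noncomputable def traceNorm {n : Type*} [Fintype n] [DecidableEq n]
    (A : Matrix n n ℂ) : ℝ := ∑ i, singularValues A i

/-- Positive-semidefinite square root (zero for non-PSD input). -/
noncomputable def msqrt {n : Type*} [Fintype n] [DecidableEq n]
    (A : Matrix n n ℂ) : Matrix n n ℂ :=
  open scoped Classical in
  if h : A.PosSemidef then
    h.1.eigenvectorUnitary.1 * diagonal ((↑) ∘ (√·) ∘ h.1.eigenvalues) *
      (star h.1.eigenvectorUnitary : Matrix n n ℂ) else 0

/-- Root fidelity √F(ρ,σ) = Tr √(√ρ σ √ρ). -/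
noncomputable def rootFid {n : Type*} [Fintype n] [DecidableEq n]
    (ρ σ : Matrix n n ℂ) : ℝ := ((msqrt (msqrt ρ * σ * msqrt ρ)).trace).re

/-- A density matrix: positive semidefinite with unit trace. -/
def IsDensity {n : Type*} [Fintype n] [DecidableEq n] (ρ : Matrix n n ℂ) : Prop :=
  ρ.PosSemidef ∧ ρ.trace = 1

/-- Partial transpose on the second tensor factor. -/
noncomputable def ptB {dA dB : ℕ} (X : Matrix (Fin dA × Fin dB) (Fin dA × Fin dB) ℂ) :
    Matrix (Fin dA × Fin dB) (Fin dA × Fin dB) ℂ :=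
  Matrix.of fun p q => X (p.1, q.2) (q.1, p.2)

/-- Hermitian inner product ⟨x,y⟩ = ∑ conj(xᵢ) yᵢ. -/
noncomputable def hinner {ι : Type*} [Fintype ι] (x y : ι → ℂ) : ℂ := ∑ i, star (x i) * y i

/-- Entrywise complex conjugate of a vector. -/
noncomputable def cconj {ι : Type*} (x : ι → ℂ) : ι → ℂ := fun i => star (x i)
open Kronecker

noncomputable def pauliY : Matrix (Fin 2) (Fin 2) ℂ := !![0, -Complex.I; Complex.I, 0]

noncomputable def etaState : Matrix (Fin 2 × Fin 2) (Fin 2 × Fin 2) ℂ :=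
  (1/4 : ℂ) • ((1 : Matrix (Fin 2 × Fin 2) (Fin 2 × Fin 2) ℂ) + pauliY ⊗ₖ pauliY)

noncomputable def Pp : Matrix (Fin 2) (Fin 2) ℂ := !![1/2, -Complex.I/2; Complex.I/2, 1/2]
noncomputable def Pm : Matrix (Fin 2) (Fin 2) ℂ := !![1/2, Complex.I/2; -Complex.I/2, 1/2]

lemma Pp_density : IsDensity Pp := by
  constructor
  · have h : Ppᴴ * Pp = Pp := by
      ext i j
      fin_cases i <;> fin_cases j <;>
        simp [Pp, Matrix.mul_apply, Fin.sum_univ_two, Complex.ext_iff, map_inv₀, Complex.conj_ofNat] <;> ring_nf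
    exact h ▸ Matrix.posSemidef_conjTranspose_mul_self Pp
  · simp [Pp, Matrix.trace, Matrix.diag, Fin.sum_univ_two]; norm_num

lemma Pm_density : IsDensity Pm := by
  constructor
  · have h : Pmᴴ * Pm = Pm := by
      ext i j
      fin_cases i <;> fin_cases j <;>
        simp [Pm, Matrix.mul_apply, Fin.sum_univ_two, Complex.ext_iff, map_inv₀, Complex.conj_ofNat] <;> ring_nf
    exact h ▸ Matrix.posSemidef_conjTranspose_mul_self Pm
  · simp [Pm, Matrix.trace, Matrix.diag, Fin.sum_univ_two]; norm_num

set_option maxHeartbeats 1000000 in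
lemma eta_decomp : etaState = ((1/2:ℝ) : ℂ) • (Pp ⊗ₖ Pp) + ((1/2:ℝ):ℂ) • (Pm ⊗ₖ Pm) := by
  ext p q
  fin_cases p <;> fin_cases q <;>
    simp [etaState, Pp, Pm, pauliY, Matrix.one_apply, Complex.ext_iff, Prod.ext_iff,
      Fin.ext_iff] <;> ring_nf

set_option maxHeartbeats 1000000 in
lemma eta_MM : (etaState - ptB etaState)ᴴ * (etaState - ptB etaState)
    = (1/4:ℂ) • 1 := by
  ext p q
  fin_cases p <;> fin_cases q <;>
    simp [etaState, ptB, pauliY, Matrix.mul_apply, Fintype.sum_prod_type, Fin.sum_univ_two,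
      Matrix.one_apply, Complex.ext_iff, Prod.ext_iff] <;> ring_nf

/-- η = (1/4)(I + σ_y ⊗ σ_y) is a separable density matrix yet
‖η − η^{T_B}‖₁ > 0. -/
theorem eta_separable_not_pt_invariant :
    (∃ (n : ℕ) (p : Fin n → ℝ) (ρ τ : Fin n → Matrix (Fin 2) (Fin 2) ℂ),
      (∀ k, 0 ≤ p k) ∧ (∑ k, p k = 1) ∧
      (∀ k, IsDensity (ρ k)) ∧ (∀ k, IsDensity (τ k)) ∧
      etaState = ∑ k, (p k : ℂ) • (ρ k ⊗ₖ τ k)) ∧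
    0 < traceNorm (etaState - ptB etaState) := by
  constructor
  · refine ⟨2, fun _ => 1/2, ![Pp, Pm], ![Pp, Pm], fun k => by norm_num,
      by norm_num [Fin.sum_univ_two], ?_, ?_, ?_⟩
    · intro k; fin_cases k
      exacts [Pp_density, Pm_density]
    · intro k; fin_cases k
      exacts [Pp_density, Pm_density]
    · simpa [Fin.sum_univ_two] using eta_decomp
  · set M := etaState - ptB etaState with hM
    by_contra h
    push_neg at h
    have hnn : ∀ i ∈ Finset.univ, (0:ℝ) ≤ singularValues M i :=
      fun i _ => Real.sqrt_nonneg _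
    have hsum0 : ∑ i, singularValues M i = 0 :=
      le_antisymm h (Finset.sum_nonneg hnn)
    have hz := (Finset.sum_eq_zero_iff_of_nonneg hnn).mp hsum0
    have hherm := Matrix.isHermitian_conjTranspose_mul_self M
    have heig : ∀ i, hherm.eigenvalues i = 0 := by
      intro i
      have h1 : Real.sqrt (hherm.eigenvalues i) = 0 := hz i (Finset.mem_univ i)
      have h2 : (0:ℝ) ≤ hherm.eigenvalues i :=
        (Matrix.posSemidef_conjTranspose_mul_self M).eigenvalues_nonneg i
      nlinarith [Real.sq_sqrt h2]
    have hzero : Mᴴ * M = 0 := by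
      have hst := hherm.spectral_theorem
      have : Matrix.diagonal (RCLike.ofReal ∘ hherm.eigenvalues)
          = (0 : Matrix (Fin 2 × Fin 2) (Fin 2 × Fin 2) ℂ) := by
        ext p q
        by_cases hpq : p = q <;>
          simp [Matrix.diagonal, hpq, heig]
      rw [hst, this]
      simp
    have : ((1/4:ℂ) • (1 : Matrix (Fin 2 × Fin 2) (Fin 2 × Fin 2) ℂ)) = 0 := by
      rw [← eta_MM]; exact hzero
    have h14 := congrFun (congrFun this (0,0)) (0,0)
    simp [Matrix.one_apply] at h14
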